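/- Let E be a normed space, V ⊂ E an open set, and (v_k^ε)_{ε>0}, v_k ∈ E for k = 0, …, t sequences such that v_0^ε = v_0, and for each step either (a) v_{k-1} ∈ V and ‖v_k^ε − v_k‖ ≤ ‖v_{k-1}^ε − v_{k-1}‖ + ε whenever v_{k-1}^ε ∈ V, or (b) v_{k-1} ∈ (closure V)^c and v_k = v_{k-1}, v_k^ε = v_{k-1}^ε whenever v_{k-1}^ε ∈ V^c. Assume additionally that v_{k-1} ∉ ∂V for all k. Then for every k ≤ t, ‖v_k^ε − v_k‖ → 0 as ε → 0. -/
import Mathlib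


open Filter Set

theorem discretized_chain_convergence
    {E : Type*} [NormedAddCommGroup E]
    (V : Set E) (hV : IsOpen V)
    (t : ℕ) (v : ℝ → ℕ → E) (w : ℕ → E)
    (hinit : ∀ ε : ℝ, 0 < ε → v ε 0 = w 0)
    (hboundary : ∀ k : ℕ, 1 ≤ k → k ≤ t → w (k - 1) ∉ frontier V)
    (hstep : ∀ k : ℕ, 1 ≤ k → k ≤ t →
      (w (k - 1) ∈ V ∧
        ∀ ε : ℝ, 0 < ε → v ε (k - 1) ∈ V →
          ‖v ε k - w k‖ ≤ ‖v ε (k - 1) - w (k - 1)‖ + ε) ∨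
      (w (k - 1) ∈ (closure V)ᶜ ∧ w k = w (k - 1) ∧
        ∀ ε : ℝ, 0 < ε → v ε (k - 1) ∉ V → v ε k = v ε (k - 1))) :
    ∀ k : ℕ, k ≤ t →
      Tendsto (fun ε : ℝ => ‖v ε k - w k‖) (nhdsWithin 0 (Ioi 0)) (nhds 0) := by
  intro k hk
  induction k with
  | zero =>
    refine Tendsto.congr' ?_ (tendsto_const_nhds (α := ℝ))
    filter_upwards [self_mem_nhdsWithin] with ε hε
    simp [hinit ε hε]
  | succ n ih =>
    have ihn := ih (Nat.le_of_succ_le hk)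
    have hs := hstep (n + 1) (Nat.le_add_left 1 n) hk
    simp only [Nat.add_sub_cancel] at hs
    rcases hs with ⟨hwV, hbound⟩ | ⟨hwC, hweq, heq⟩
    · obtain ⟨δ, hδ, hball⟩ := Metric.isOpen_iff.mp hV (w n) hwV
      have hsmall : ∀ᶠ ε : ℝ in nhdsWithin 0 (Ioi 0), ‖v ε n - w n‖ < δ :=
        ihn (Iio_mem_nhds hδ)
      have hev : ∀ᶠ ε : ℝ in nhdsWithin 0 (Ioi 0),
          ‖v ε (n + 1) - w (n + 1)‖ ≤ ‖v ε n - w n‖ + ε := by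
        filter_upwards [hsmall, self_mem_nhdsWithin] with ε h1 h2
        exact hbound ε h2 (hball (by rwa [Metric.mem_ball, dist_eq_norm]))
      have hg : Tendsto (fun ε : ℝ => ‖v ε n - w n‖ + ε)
          (nhdsWithin 0 (Ioi 0)) (nhds 0) := by
        have := ihn.add (tendsto_id.mono_left (nhdsWithin_le_nhds (s := Ioi (0:ℝ))))
        simpa using this
      exact squeeze_zero' (by filter_upwards with ε using norm_nonneg _) hev hg
    · obtain ⟨δ, hδ, hball⟩ := Metric.isOpen_iff.mp (isClosed_closure.isOpen_compl)
        (w n) hwC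
      have hsmall : ∀ᶠ ε : ℝ in nhdsWithin 0 (Ioi 0), ‖v ε n - w n‖ < δ :=
        ihn (Iio_mem_nhds hδ)
      refine Tendsto.congr' ?_ ihn
      filter_upwards [hsmall, self_mem_nhdsWithin] with ε h1 h2
      have hnotV : v ε n ∉ V := fun hmem =>
        hball (by rwa [Metric.mem_ball, dist_eq_norm]) (subset_closure hmem)
      rw [heq ε h2 hnotV, hweq]
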